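/- For n ≥ 2d ≥ 2 the chromatic number of the circular complete graph K_{n/d} equals the ceiling of n/d. -/

import Mathlib

/-- The circular complete graph `K_{n/d}`: vertices `ℤ/n`, with `i ~ j` iff the cyclic
distance `|i-j|` satisfies `d ≤ |i-j| ≤ n-d` (stated symmetrically via both `(i-j).val`
and `(j-i).val`, which is equivalent). -/
def circGraph (n d : ℕ) : SimpleGraph (ZMod n) where
  Adj i j := i ≠ j ∧ (d ≤ (i - j).val ∧ (i - j).val ≤ n - d)
    ∧ (d ≤ (j - i).val ∧ (j - i).val ≤ n - d)
  symm := by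
    constructor
    intro i j h
    exact ⟨h.1.symm, h.2.2, h.2.1⟩
  loopless := by
    constructor
    intro i h
    exact h.1 rfl

/-- Any independent set of `circGraph n d` has at most `d` elements. -/
lemma circGraph_indep_card_le (n d : ℕ) [NeZero n] (hd : 1 ≤ d) (hn : 2 * d ≤ n)
    (S : Finset (ZMod n)) (hS : ∀ x ∈ S, ∀ y ∈ S, ¬ (circGraph n d).Adj x y) :
    S.card ≤ d := by
  rcases S.eq_empty_or_nonempty with h | ⟨x₀, hx₀⟩
  · simp [h]
  -- every element of S has `(y - x₀).val` in `[0, d-1] ∪ [n-d+1, n-1]`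
  have key : ∀ y ∈ S, (y - x₀).val < d ∨ n - d < (y - x₀).val := by
    intro y hy
    by_cases hyx : y = x₀
    · left; simp [hyx]; omega
    · have hne : y - x₀ ≠ 0 := sub_ne_zero.mpr hyx
      have hneg : (x₀ - y).val = n - (y - x₀).val := by
        have : x₀ - y = -(y - x₀) := by ring
        rw [this, ZMod.neg_val, if_neg hne]
      have hv1 : (y - x₀).val ≠ 0 := fun h => hne (ZMod.val_injective n (h.trans ZMod.val_zero.symm))
      have hv2 : (y - x₀).val < n := ZMod.val_lt _
      have hadj : ¬ (x₀ ≠ y ∧ (d ≤ (x₀ - y).val ∧ (x₀ - y).val ≤ n - d)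
          ∧ (d ≤ (y - x₀).val ∧ (y - x₀).val ≤ n - d)) := hS x₀ hx₀ y hy
      have hxy : x₀ ≠ y := fun h => hyx h.symm
      have harith : ¬ ((d ≤ (x₀ - y).val ∧ (x₀ - y).val ≤ n - d)
          ∧ (d ≤ (y - x₀).val ∧ (y - x₀).val ≤ n - d)) := fun hh => hadj ⟨hxy, hh⟩
      omega
  -- the injection into `Finset.range d`
  classical
  have := Finset.card_le_card_of_injOn
    (f := fun y : ZMod n => if (y - x₀).val < d then (y - x₀).val else (y - x₀).val - (n - d))
    (s := S) (t := Finset.range d) ?_ ?_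
  · simpa using this
  · intro y hy
    rcases key y hy with h | h
    · simp [h]
    · have hv2 : (y - x₀).val < n := ZMod.val_lt _
      have : ¬ (y - x₀).val < d := by omega
      simp only [this, if_false, Finset.coe_range, Set.mem_Iio]
      omega
  · intro y hy z hz hfyz
    simp only at hfyz
    have hvy := ZMod.val_lt (y - x₀)
    have hvz := ZMod.val_lt (z - x₀)
    -- helper to derive a contradiction in the mixed case
    have mixed : ∀ a ∈ S, ∀ b ∈ S, (a - x₀).val < d → n - d < (b - x₀).val →
        (a - x₀).val = (b - x₀).val - (n - d) → False := by
      intro a ha b hb hla hhb heq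
      have hle : (a - x₀).val ≤ (b - x₀).val := by omega
      have hsub : (b - a).val = (b - x₀).val - (a - x₀).val := by
        have : b - a = (b - x₀) - (a - x₀) := by ring
        rw [this, ZMod.val_sub hle]
      have hvb : (b - x₀).val < n := ZMod.val_lt _
      have hba : (b - a).val = n - d := by omega
      have hbane : b - a ≠ 0 := by
        intro h0
        have : (b - a).val = 0 := by rw [h0]; exact ZMod.val_zero
        omega
      have hab : (a - b).val = n - (b - a).val := by
        have : a - b = -(b - a) := by ring
        rw [this, ZMod.neg_val, if_neg hbane]
      have haneb : a ≠ b := fun h => hbane (by rw [h]; ring)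
      exact hS a ha b hb ⟨haneb, ⟨by omega, by omega⟩, ⟨by omega, by omega⟩⟩
    rcases key y hy with h1 | h1 <;> rcases key z hz with h2 | h2
    · rw [if_pos h1, if_pos h2] at hfyz
      have : y - x₀ = z - x₀ := ZMod.val_injective n hfyz
      exact sub_left_injective this
    · rw [if_pos h1, if_neg (by omega)] at hfyz
      exact absurd (mixed y hy z hz h1 h2 hfyz) (by simp)
    · rw [if_neg (by omega), if_pos h2] at hfyz
      exact absurd (mixed z hz y hy h2 h1 hfyz.symm) (by simp)
    · rw [if_neg (by omega), if_neg (by omega)] at hfyz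
      have : (y - x₀).val = (z - x₀).val := by omega
      exact sub_left_injective (ZMod.val_injective n this)

/-- for `n ≥ 2d ≥ 2`, the chromatic number of the circular complete graph
`K_{n/d}` equals `⌈n/d⌉`. -/
theorem circGraph_chromaticNumber (n d : ℕ) [NeZero n] (hd : 1 ≤ d) (hn : 2 * d ≤ n) :
    (circGraph n d).chromaticNumber = ((⌈(n : ℚ) / (d : ℚ)⌉₊ : ℕ) : ℕ∞) := by
  classical
  set t : ℕ := ⌈(n : ℚ) / (d : ℚ)⌉₊ with ht
  have hdpos : (0 : ℚ) < d := by exact_mod_cast hd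
  have hnt : n ≤ t * d := by
    have h1 : (n : ℚ) / d ≤ t := Nat.le_ceil _
    have : (n : ℚ) ≤ t * d := by
      rw [div_le_iff₀ hdpos] at h1; exact h1
    exact_mod_cast this
  have hnpos : 0 < n := Nat.pos_of_ne_zero (NeZero.ne n)
  -- upper bound: explicit coloring with t colors
  have hcol : (circGraph n d).Colorable t := by
    have htpos : 0 < t := by
      by_contra h
      push_neg at h
      interval_cases t <;> omega
    refine ⟨SimpleGraph.Coloring.mk
      (fun v => ⟨v.val / d, by
        have hv : v.val < n := ZMod.val_lt v
        have : v.val < t * d := by omega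
        exact Nat.div_lt_of_lt_mul (by rwa [mul_comm] at this)⟩) ?_⟩
    intro v w hadj
    obtain ⟨hne, ⟨h1, h2⟩, h3, h4⟩ := hadj
    intro hc
    have hc' : v.val / d = w.val / d := by simpa [Fin.ext_iff] using hc
    have hdiff : ∀ a b : ZMod n, b.val ≤ a.val → a.val / d = b.val / d → a.val - b.val < d := by
      intro a b hab heq
      by_contra hcon
      push_neg at hcon
      have h5 : b.val + d ≤ a.val := by omega
      have h6 : (b.val + d) / d ≤ a.val / d := Nat.div_le_div_right h5
      rw [Nat.add_div_right _ (show 0 < d by omega)] at h6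
      omega
    rcases le_total w.val v.val with hle | hle
    · have hsub : (v - w).val = v.val - w.val := ZMod.val_sub hle
      have hd2 := hdiff v w hle hc'
      omega
    · have hsub : (w - v).val = w.val - v.val := ZMod.val_sub hle
      have hd2 := hdiff w v hle hc'.symm
      omega
  -- lower bound
  refine le_antisymm (by exact_mod_cast hcol.chromaticNumber_le) ?_
  rw [SimpleGraph.chromaticNumber]
  refine le_iInf₂ fun m hm => ?_
  obtain ⟨C⟩ := hm
  rw [Nat.cast_le]
  -- each color class has ≤ d elements, so n ≤ m * d
  have hcount : n ≤ m * d := by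
    have hcard : (Finset.univ : Finset (ZMod n)).card = n := by
      simp [ZMod.card n]
    have hsum := Finset.card_eq_sum_card_fiberwise
      (f := C) (s := (Finset.univ : Finset (ZMod n))) (t := (Finset.univ : Finset (Fin m)))
      (fun x _ => Finset.mem_univ _)
    have hfib : ∀ i : Fin m, ((Finset.univ : Finset (ZMod n)).filter (fun x => C x = i)).card ≤ d := by
      intro i
      apply circGraph_indep_card_le n d hd hn
      intro x hx y hy hadj
      simp only [Finset.mem_filter] at hx hy
      exact C.valid hadj (by rw [hx.2, hy.2])
    rw [hcard] at hsum
    have h1 : ∑ i : Fin m, ((Finset.univ : Finset (ZMod n)).filter (fun x => C x = i)).card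
        ≤ ∑ _i : Fin m, d := Finset.sum_le_sum fun i _ => hfib i
    have h2 : ∑ _i : Fin m, d = m * d := by simp [mul_comm]
    omega
  rw [ht, Nat.ceil_le, div_le_iff₀ hdpos]
  exact_mod_cast hcount
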